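/- arXiv:2209.14468 — 8 statements merged into one kernel-verified Lean document; each statement's English description precedes it below -/
import Mathlib

section
/- If a committee W of size at most k is Lindahl priceable, then W lies in the core. -/
/-- If a committee `W` of size at most `k` is Lindahl priceable, then `W` lies in the core.
Approval election: `n` voters, `m` unit-size candidates, voter `i` approves `A i`,
utility of `T` for voter `i` is `|A i ∩ T|`, `R = n/k`. -/
theorem lindahl_priceable_implies_core
    (n m k : ℕ) (hn : 0 < n) (hk : 0 < k)
    (A : Fin n → Finset (Fin m)) (W : Finset (Fin m)) (hW : W.card ≤ k)
    (p : Fin n → Fin m → ℝ)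
    (hp : ∀ i j, 0 ≤ p i j)
    (hcol : ∀ j, ∑ i, p i j ≤ (n : ℝ) / k)
    (hprice : ∀ (i : Fin n) (T : Finset (Fin m)),
      (W ∩ A i).card + 1 ≤ (T ∩ A i).card → 1 < ∑ j ∈ T, p i j) :
    ¬ ∃ (S : Finset (Fin n)) (T : Finset (Fin m)), S.Nonempty ∧
      (T.card : ℝ) ≤ (S.card : ℝ) * k / n ∧
      ∀ i ∈ S, (W ∩ A i).card < (T ∩ A i).card := by
  rintro ⟨S, T, hSne, hTcard, hblock⟩
  have hn' : (0:ℝ) < n := by exact_mod_cast hn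
  have hk' : (0:ℝ) < k := by exact_mod_cast hk
  -- lower bound on total payment
  have h1 : (S.card : ℝ) < ∑ i ∈ S, ∑ j ∈ T, p i j := by
    have : ∑ i ∈ S, (1:ℝ) < ∑ i ∈ S, ∑ j ∈ T, p i j := by
      apply Finset.sum_lt_sum_of_nonempty hSne
      intro i hi
      exact hprice i T (hblock i hi)
    simpa using this
  -- upper bound
  have h2 : ∑ i ∈ S, ∑ j ∈ T, p i j ≤ (S.card : ℝ) := by
    calc ∑ i ∈ S, ∑ j ∈ T, p i j
        ≤ ∑ i, ∑ j ∈ T, p i j := by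
          apply Finset.sum_le_sum_of_subset_of_nonneg (Finset.subset_univ S)
          intro i _ _
          exact Finset.sum_nonneg fun j _ => hp i j
      _ = ∑ j ∈ T, ∑ i, p i j := Finset.sum_comm
      _ ≤ ∑ j ∈ T, (n : ℝ) / k := Finset.sum_le_sum fun j _ => hcol j
      _ = (T.card : ℝ) * ((n : ℝ) / k) := by rw [Finset.sum_const, nsmul_eq_mul]
      _ ≤ ((S.card : ℝ) * k / n) * ((n : ℝ) / k) := by
          apply mul_le_mul_of_nonneg_right hTcard
          positivity
      _ = (S.card : ℝ) := by field_simp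
  linarith
end

section
/- If a committee W of size at most k is weakly priceable, then W lies in the sub-core. -/
/-- If a committee `W` of size at most `k` is weakly priceable, then `W` lies in the sub-core. -/
theorem weakly_priceable_implies_subcore
    (n m k : ℕ) (hn : 0 < n) (hk : 0 < k)
    (A : Fin n → Finset (Fin m)) (W : Finset (Fin m)) (hW : W.card ≤ k)
    (p : Fin n → Fin m → ℝ)
    (hp : ∀ i j, 0 ≤ p i j)
    (hcol : ∀ j, ∑ i, p i j ≤ (n : ℝ) / k)
    (hprice : ∀ (i : Fin n), ∀ d ∈ A i \ W, 1 < p i d + ∑ j ∈ A i ∩ W, p i j) :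
    ¬ ∃ (S : Finset (Fin n)) (T : Finset (Fin m)), S.Nonempty ∧
      (T.card : ℝ) ≤ (S.card : ℝ) * k / n ∧
      ∀ i ∈ S, A i ∩ W ⊂ A i ∩ T := by
  rintro ⟨S, T, hSne, hTcard, hdev⟩
  -- For each i ∈ S, the sum over A i ∩ T exceeds 1.
  have key : ∀ i ∈ S, 1 < ∑ j ∈ A i ∩ T, p i j := by
    intro i hi
    obtain ⟨hsub, hne⟩ := hdev i hi
    obtain ⟨d, hdT, hdW⟩ : ∃ d ∈ A i ∩ T, d ∉ A i ∩ W := by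
      by_contra h
      push_neg at h
      exact hne (fun x hx => h x hx)
    have hdA : d ∈ A i := (Finset.mem_inter.mp hdT).1
    have hdnW : d ∉ W := fun h => hdW (Finset.mem_inter.mpr ⟨hdA, h⟩)
    have h1 : 1 < p i d + ∑ j ∈ A i ∩ W, p i j :=
      hprice i d (Finset.mem_sdiff.mpr ⟨hdA, hdnW⟩)
    have hins : p i d + ∑ j ∈ A i ∩ W, p i j = ∑ j ∈ insert d (A i ∩ W), p i j :=
      (Finset.sum_insert hdW).symm
    have hsub2 : insert d (A i ∩ W) ⊆ A i ∩ T := by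
      intro x hx
      rcases Finset.mem_insert.mp hx with rfl | hx
      · exact hdT
      · exact hsub hx
    calc 1 < p i d + ∑ j ∈ A i ∩ W, p i j := h1
      _ = ∑ j ∈ insert d (A i ∩ W), p i j := hins
      _ ≤ ∑ j ∈ A i ∩ T, p i j :=
        Finset.sum_le_sum_of_subset_of_nonneg hsub2 (fun j _ _ => hp i j)
  have hS : (S.card : ℝ) < ∑ i ∈ S, ∑ j ∈ A i ∩ T, p i j := by
    calc (S.card : ℝ) = ∑ _i ∈ S, (1 : ℝ) := by simp
      _ < ∑ i ∈ S, ∑ j ∈ A i ∩ T, p i j := Finset.sum_lt_sum_of_nonempty hSne key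
  have hupper : ∑ i ∈ S, ∑ j ∈ A i ∩ T, p i j ≤ (T.card : ℝ) * ((n : ℝ) / k) := by
    calc ∑ i ∈ S, ∑ j ∈ A i ∩ T, p i j
        ≤ ∑ i ∈ S, ∑ j ∈ T, p i j := by
          refine Finset.sum_le_sum fun i _ => ?_
          exact Finset.sum_le_sum_of_subset_of_nonneg
            (Finset.inter_subset_right) (fun j _ _ => hp i j)
      _ = ∑ j ∈ T, ∑ i ∈ S, p i j := Finset.sum_comm
      _ ≤ ∑ j ∈ T, ∑ i, p i j := by
          refine Finset.sum_le_sum fun j _ => ?_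
          exact Finset.sum_le_sum_of_subset_of_nonneg
            (Finset.subset_univ S) (fun i _ _ => hp i j)
      _ ≤ ∑ _j ∈ T, (n : ℝ) / k := Finset.sum_le_sum fun j _ => hcol j
      _ = (T.card : ℝ) * ((n : ℝ) / k) := by
          rw [Finset.sum_const, nsmul_eq_mul]
  have hk' : (0 : ℝ) < k := by exact_mod_cast hk
  have hn' : (0 : ℝ) < n := by exact_mod_cast hn
  have hfin : (T.card : ℝ) * ((n : ℝ) / k) ≤ (S.card : ℝ) := by
    have h1 : (T.card : ℝ) * ((n : ℝ) / k) ≤ ((S.card : ℝ) * k / n) * ((n : ℝ) / k) := by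
      apply mul_le_mul_of_nonneg_right hTcard
      positivity
    have h2 : ((S.card : ℝ) * k / n) * ((n : ℝ) / k) = (S.card : ℝ) := by
      field_simp
    linarith
  linarith
end

section
/- In an approval election in which every voter approves at most 2 candidates, a committee W lies in the core if and only if it lies in the sub-core. -/
lemma card_lt_iff_ssubset_of_le_two {α : Type*} [DecidableEq α]
    (a w t : Finset α) (ha : a.card ≤ 2) :
    (w ∩ a).card < (t ∩ a).card ↔ a ∩ w ⊂ a ∩ t := by
  constructor
  · intro h
    by_cases hfull : a.card ≤ (t ∩ a).card
    · have heq : t ∩ a = a :=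
        Finset.eq_of_subset_of_card_le (Finset.inter_subset_right) hfull
      have hsub : a ∩ w ⊆ a ∩ t := by
        rw [Finset.inter_comm a t, heq]
        exact Finset.inter_subset_left
      have hcard : (a ∩ w).card < (a ∩ t).card := by
        rwa [Finset.inter_comm a w, Finset.inter_comm a t]
      exact Finset.ssubset_iff_subset_ne.mpr
        ⟨hsub, fun hEq => absurd (hEq ▸ hcard) (lt_irrefl _)⟩
    · push_neg at hfull
      have h1 : (t ∩ a).card ≤ 1 := by omega
      have h0 : (w ∩ a).card = 0 := by omega
      have hwe : a ∩ w = ∅ := by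
        rw [Finset.inter_comm]; exact Finset.card_eq_zero.mp h0
      rw [hwe]
      have : (a ∩ t).Nonempty := by
        rw [Finset.inter_comm]
        exact Finset.card_pos.mp (by omega)
      exact Finset.ssubset_iff_of_subset (Finset.empty_subset _) |>.mpr
        ⟨this.choose, this.choose_spec, Finset.notMem_empty _⟩
  · intro h
    have := Finset.card_lt_card h
    rwa [Finset.inter_comm a w, Finset.inter_comm a t] at this

/-- In an approval election in which every voter approves at most 2 candidates,
a committee `W` lies in the core if and only if it lies in the sub-core. -/
theorem core_iff_subcore_of_approvals_le_two
    (n m k : ℕ) (hn : 0 < n) (hk : 0 < k)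
    (A : Fin n → Finset (Fin m)) (hA2 : ∀ i, (A i).card ≤ 2)
    (W : Finset (Fin m)) (hW : W.card ≤ k) :
    (¬ ∃ (S : Finset (Fin n)) (T : Finset (Fin m)), S.Nonempty ∧
      (T.card : ℝ) ≤ (S.card : ℝ) * k / n ∧
      ∀ i ∈ S, (W ∩ A i).card < (T ∩ A i).card)
    ↔
    (¬ ∃ (S : Finset (Fin n)) (T : Finset (Fin m)), S.Nonempty ∧
      (T.card : ℝ) ≤ (S.card : ℝ) * k / n ∧
      ∀ i ∈ S, A i ∩ W ⊂ A i ∩ T) := by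
  apply not_congr
  apply exists_congr; intro S
  apply exists_congr; intro T
  apply and_congr_right; intro _
  apply and_congr_right; intro _
  exact forall₂_congr fun i _ =>
    card_lt_iff_ssubset_of_le_two (A i) W T (hA2 i)
end

section
/- In the integrality-gap instance, the committee W consisting of all group candidates C_1,…,C_p and p dummy candidates satisfies θ_c ≥ 1/2: for any nonempty deviating set S of voters and deviating committee T, |T| ≥ |S|/2 + 1, hence R·|T|/|S| ≥ 1/2 (with R = 1). -/
attribute [local instance] Classical.propDecidable

/-- Voters of the integrality-gap instance: group `V_ℓ` (for `ℓ : Fin p`, representing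
the paper's group `ℓ+1`) contains `2^(ℓ+1)` voters. -/
abbrev GapVoter (p : ℕ) := Σ ℓ : Fin p, Fin (2 ^ (ℓ.1 + 1))

/-- Candidates: group `C_q` of `2^(q+1) - 1` candidates approved only by `V_q`,
a group `C'` of `2^p` candidates approved by all voters, and `p` dummy candidates. -/
abbrev GapCand (p : ℕ) := (Σ q : Fin p, Fin (2 ^ (q.1 + 1) - 1)) ⊕ (Fin (2 ^ p) ⊕ Fin p)

/-- Approval sets of the integrality-gap instance. -/
noncomputable def gapA (p : ℕ) (v : GapVoter p) : Finset (GapCand p) :=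
  Finset.univ.filter (fun c => match c with
    | Sum.inl ⟨q, _⟩ => q = v.1
    | Sum.inr (Sum.inl _) => True
    | Sum.inr (Sum.inr _) => False)

/-- The committee `W = (∪_q C_q) ∪ dummies` of the integrality-gap instance. -/
noncomputable def gapW (p : ℕ) : Finset (GapCand p) :=
  Finset.univ.filter (fun c => match c with
    | Sum.inr (Sum.inl _) => False
    | _ => True)

/-- In the integrality-gap instance (with `R = n/k = 1`), every deviation `(S, T)`
(each voter of `S` gets strictly larger utility from `T` than from `W`) satisfies
`|T| ≥ |S|/2 + 1`, hence `R·|T|/|S| ≥ 1/2`; i.e. `θ_c ≥ 1/2`. -/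
theorem integrality_gap_theta_c_ge_half (p : ℕ) (hp : 1 ≤ p)
    (S : Finset (GapVoter p)) (T : Finset (GapCand p))
    (hS : S.Nonempty)
    (hdev : ∀ i ∈ S, (gapW p ∩ gapA p i).card < (T ∩ gapA p i).card) :
    (S.card : ℝ) / 2 + 1 ≤ (T.card : ℝ) ∧
    (1 / 2 : ℝ) ≤ 1 * (T.card : ℝ) / (S.card : ℝ) := by

  classical
  have key : ∀ i ∈ S, 2 ^ (i.1.1 + 1) ≤ T.card := by
    rintro ⟨ℓ, j⟩ hi
    show 2 ^ (ℓ.1 + 1) ≤ T.card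
    have hW : 2 ^ (ℓ.1 + 1) - 1 ≤ (gapW p ∩ gapA p ⟨ℓ, j⟩).card := by
      have := Finset.card_le_card_of_injOn
        (f := fun t : Fin (2 ^ (ℓ.1 + 1) - 1) => (Sum.inl ⟨ℓ, t⟩ : GapCand p))
        (s := Finset.univ) (t := gapW p ∩ gapA p ⟨ℓ, j⟩)
        (fun t _ => by simp [gapW, gapA])
        (fun a _ b _ h => by simpa using h)
      simpa using this
    have h1 := hdev ⟨ℓ, j⟩ hi
    have h2 : (T ∩ gapA p ⟨ℓ, j⟩).card ≤ T.card :=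
      Finset.card_le_card Finset.inter_subset_left
    have h3 : 1 ≤ 2 ^ (ℓ.1 + 1) := Nat.one_le_two_pow
    omega
  have hz : 2 ≤ T.card := by
    obtain ⟨⟨ℓ, j⟩, hi⟩ := hS
    have hk : 2 ^ (ℓ.1 + 1) ≤ T.card := key ⟨ℓ, j⟩ hi
    have h2 : 2 ≤ 2 ^ (ℓ.1 + 1) := by
      calc 2 = 2 ^ 1 := by norm_num
      _ ≤ 2 ^ (ℓ.1 + 1) := Nat.pow_le_pow_right (by norm_num) (by omega)
    omega
  have hcard : S.card ≤ 2 * T.card - 2 := by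
    have := Finset.card_le_card_of_injOn
      (f := fun i : GapVoter p => 2 ^ (i.1.1 + 1) - 2 + i.2.1)
      (s := S) (t := Finset.range (2 * T.card - 2))
      (fun i hi => by
        obtain ⟨ℓ, j⟩ := i
        have hk : 2 ^ (ℓ.1 + 1) ≤ T.card := key ⟨ℓ, j⟩ hi
        have hj : j.1 < 2 ^ (ℓ.1 + 1) := j.2
        simp only [Finset.mem_coe, Finset.mem_range]
        omega)
      (by
        rintro ⟨ℓ1, j1⟩ h1 ⟨ℓ2, j2⟩ h2 heq
        simp only at heq
        have hj1 : j1.1 < 2 ^ (ℓ1.1 + 1) := j1.2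
        have hj2 : j2.1 < 2 ^ (ℓ2.1 + 1) := j2.2
        have hℓ : ℓ1 = ℓ2 := by
          rcases lt_trichotomy ℓ1.1 ℓ2.1 with h | h | h
          · exfalso
            have hAB : 2 * 2 ^ (ℓ1.1 + 1) ≤ 2 ^ (ℓ2.1 + 1) := by
              calc 2 * 2 ^ (ℓ1.1 + 1) = 2 ^ (ℓ1.1 + 1 + 1) := by ring
              _ ≤ 2 ^ (ℓ2.1 + 1) := Nat.pow_le_pow_right (by norm_num) (by omega)
            have hA : 2 ≤ 2 ^ (ℓ1.1 + 1) := by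
              calc 2 = 2 ^ 1 := by norm_num
              _ ≤ 2 ^ (ℓ1.1 + 1) := Nat.pow_le_pow_right (by norm_num) (by omega)
            omega
          · exact Fin.ext h
          · exfalso
            have hAB : 2 * 2 ^ (ℓ2.1 + 1) ≤ 2 ^ (ℓ1.1 + 1) := by
              calc 2 * 2 ^ (ℓ2.1 + 1) = 2 ^ (ℓ2.1 + 1 + 1) := by ring
              _ ≤ 2 ^ (ℓ1.1 + 1) := Nat.pow_le_pow_right (by norm_num) (by omega)
            have hA : 2 ≤ 2 ^ (ℓ2.1 + 1) := by
              calc 2 = 2 ^ 1 := by norm_num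
              _ ≤ 2 ^ (ℓ2.1 + 1) := Nat.pow_le_pow_right (by norm_num) (by omega)
            omega
        subst hℓ
        have hA : 2 ≤ 2 ^ (ℓ1.1 + 1) := by
          calc 2 = 2 ^ 1 := by norm_num
          _ ≤ 2 ^ (ℓ1.1 + 1) := Nat.pow_le_pow_right (by norm_num) (by omega)
        have : j1 = j2 := Fin.ext (by omega)
        rw [this])
    simpa using this
  have hnat : S.card + 2 ≤ 2 * T.card := by omega
  have hreal : (S.card : ℝ) + 2 ≤ 2 * (T.card : ℝ) := by exact_mod_cast hnat
  have hSpos : (0 : ℝ) < S.card := by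
    exact_mod_cast Finset.card_pos.mpr hS
  constructor
  · linarith
  · rw [le_div_iff₀ hSpos]
    linarith
end

section
/- In the integrality-gap instance, the fractional LP solution setting x_j = 2^{−p} for all j ∈ C', z_i = 2^{−ℓ} for each voter i ∈ V_ℓ, and y_{ij} = min(x_j, z_i), is feasible for the LP relaxation and has objective value at most 1/p; hence θ_p ≤ 1/p while θ_c ≥ 1/2, giving an Ω(log m) integrality gap. -/
attribute [local instance] Classical.propDecidable

/-- LP solution: `x_j = 2^{-p}` on `C'` and `0` elsewhere. -/
noncomputable def gapx (p : ℕ) : GapCand p → ℝ := fun c => match c with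
  | Sum.inr (Sum.inl _) => 1 / 2 ^ p
  | _ => 0

/-- LP solution: `z_i = 2^{-ℓ}` for a voter of the group with `2^ℓ` voters. -/
noncomputable def gapz (p : ℕ) : GapVoter p → ℝ := fun v => 1 / 2 ^ (v.1.1 + 1)

attribute [local instance] Classical.propDecidable

lemma gapWA_eq (p : ℕ) (v : GapVoter p) :
    gapW p ∩ gapA p v =
      Finset.univ.image (fun j : Fin (2 ^ (v.1.1 + 1) - 1) => (Sum.inl ⟨v.1, j⟩ : GapCand p)) := by
  ext c
  rcases c with ⟨q, j⟩ | (j | j)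
  · simp only [gapW, gapA, Finset.mem_inter, Finset.mem_filter, Finset.mem_univ, true_and,
      Finset.mem_image]
    constructor
    · intro h
      subst h
      exact ⟨j, rfl⟩
    · rintro ⟨j', h⟩
      cases h
      rfl
  · simp [gapW, gapA]
  · simp [gapW, gapA]

lemma cardWA (p : ℕ) (v : GapVoter p) :
    (gapW p ∩ gapA p v).card = 2 ^ (v.1.1 + 1) - 1 := by
  rw [gapWA_eq]
  rw [Finset.card_image_of_injective _ (fun a b h => by
    simpa [Sigma.ext_iff] using h)]
  simp
lemma sumA (p : ℕ) (v : GapVoter p) :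
    ∑ j ∈ gapA p v, min (gapx p j) (gapz p v) = 1 := by
  have hz : (0:ℝ) ≤ gapz p v := by rw [gapz]; positivity
  have hmin : min (1 / 2 ^ p : ℝ) (gapz p v) = 1 / 2 ^ p := by
    apply min_eq_left
    rw [gapz]
    apply one_div_le_one_div_of_le (by positivity)
    exact pow_le_pow_right₀ one_le_two (Nat.succ_le_of_lt v.1.2)
  rw [gapA, Finset.sum_filter, Fintype.sum_sum_type, Fintype.sum_sum_type]
  simp only [gapx, min_eq_left hz, Finset.sum_const]
  rw [hmin]
  field_simp
  simp

lemma sumz (p : ℕ) : ∑ i : GapVoter p, gapz p i = p := by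
  rw [← Finset.univ_sigma_univ, Finset.sum_sigma]
  simp [gapz, Finset.sum_const, mul_one_div]

lemma sumx (p : ℕ) : ∑ j : GapCand p, gapx p j = 1 := by
  rw [Fintype.sum_sum_type, Fintype.sum_sum_type]
  simp [gapx, Finset.sum_const, mul_one_div]
lemma voterKey_inj (p : ℕ) :
    Function.Injective (fun v : GapVoter p => 2 ^ (v.1.1 + 1) + v.2.1) := by
  rintro ⟨⟨a, hap⟩, ⟨k, hk⟩⟩ ⟨⟨b, hbp⟩, ⟨k', hk'⟩⟩ h
  dsimp at h hk hk'
  have hab : a = b := by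
    have h1 : Nat.log 2 (2 ^ (a + 1) + k) = a + 1 :=
      Nat.log_eq_of_pow_le_of_lt_pow (Nat.le_add_right _ _)
        (by have : 2 ^ (a + 1 + 1) = 2 ^ (a + 1) + 2 ^ (a + 1) := by ring
            omega)
    have h2 : Nat.log 2 (2 ^ (b + 1) + k') = b + 1 :=
      Nat.log_eq_of_pow_le_of_lt_pow (Nat.le_add_right _ _)
        (by have : 2 ^ (b + 1 + 1) = 2 ^ (b + 1) + 2 ^ (b + 1) := by ring
            omega)
    rw [h] at h1
    omega
  subst hab
  have : k = k' := by omega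
  subst this
  rfl

/-- In the integrality-gap instance, the fractional solution `x_j = 2^{-p}` on `C'`,
`z_i = 2^{-ℓ}` for `i ∈ V_ℓ`, `y_{ij} = min(x_j, z_i)` is feasible for the LP relaxation
and has objective value (with `R = 1`) at most `1/p`; hence `θ_p ≤ 1/p` while `θ_c ≥ 1/2`,
an `Ω(log m)` integrality gap. -/
theorem integrality_gap_lp_value (p : ℕ) (hp : 1 ≤ p) :
    (∀ i : GapVoter p,
        gapz p i * (((gapW p ∩ gapA p i).card : ℝ) + 1)
          ≤ ∑ j ∈ gapA p i, min (gapx p j) (gapz p i)) ∧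
    (∀ (i : GapVoter p) (j : GapCand p), min (gapx p j) (gapz p i) ≤ gapx p j) ∧
    (∀ (i : GapVoter p) (j : GapCand p), min (gapx p j) (gapz p i) ≤ gapz p i) ∧
    (∀ j : GapCand p, 0 ≤ gapx p j) ∧
    (∀ i : GapVoter p, 0 ≤ gapz p i) ∧
    (1 : ℝ) ≤ ∑ i : GapVoter p, gapz p i ∧
    1 * (∑ j : GapCand p, gapx p j) / (∑ i : GapVoter p, gapz p i) ≤ 1 / (p : ℝ) ∧
    (∀ (S : Finset (GapVoter p)) (T : Finset (GapCand p)), S.Nonempty →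
      (∀ i ∈ S, (gapW p ∩ gapA p i).card < (T ∩ gapA p i).card) →
      (1 / 2 : ℝ) ≤ 1 * (T.card : ℝ) / (S.card : ℝ)) := by
  refine ⟨?_, fun i j => min_le_left _ _, fun i j => min_le_right _ _, ?_, ?_, ?_, ?_, ?_⟩
  · intro i
    rw [sumA, cardWA]
    have h1 : ((2 ^ (i.1.1 + 1) - 1 : ℕ) : ℝ) + 1 = 2 ^ (i.1.1 + 1) := by
      have := Nat.one_le_two_pow (n := i.1.1 + 1)
      push_cast [this]
      ring
    rw [h1, gapz]
    rw [one_div_mul_cancel (by positivity)]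
  · intro j
    rcases j with _ | (_ | _) <;> simp [gapx]
  · intro i
    rw [gapz]; positivity
  · rw [sumz]; exact_mod_cast hp
  · rw [sumx, sumz]; simp
  · intro S T hS hlt
    obtain ⟨i₀, hi₀S, hmax⟩ := Finset.exists_max_image S (fun v => v.1.1) hS
    have hT : 2 ^ (i₀.1.1 + 1) ≤ T.card := by
      have h1 := hlt i₀ hi₀S
      rw [cardWA] at h1
      have h2 : (T ∩ gapA p i₀).card ≤ T.card :=
        Finset.card_le_card Finset.inter_subset_left
      have h3 : 1 ≤ 2 ^ (i₀.1.1 + 1) := Nat.one_le_two_pow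
      omega
    have hS2 : S.card ≤ 2 ^ (i₀.1.1 + 2) := by
      calc S.card ≤ (Finset.range (2 ^ (i₀.1.1 + 2))).card := by
            apply Finset.card_le_card_of_injOn (fun v => 2 ^ (v.1.1 + 1) + v.2.1)
            · intro v hv
              rw [Finset.mem_coe, Finset.mem_range]
              beta_reduce
              have h1 : v.1.1 ≤ i₀.1.1 := hmax v hv
              have h2 : v.2.1 < 2 ^ (v.1.1 + 1) := v.2.2
              have h3 : 2 ^ (v.1.1 + 2) ≤ 2 ^ (i₀.1.1 + 2) :=
                Nat.pow_le_pow_right (by norm_num) (by omega)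
              have h4 : 2 ^ (v.1.1 + 2) = 2 ^ (v.1.1 + 1) + 2 ^ (v.1.1 + 1) := by ring
              omega
            · exact fun a _ b _ h => voterKey_inj p h
        _ = 2 ^ (i₀.1.1 + 2) := Finset.card_range _
    have hSpos : (0:ℝ) < S.card := by
      exact_mod_cast Finset.card_pos.mpr hS
    have key : (S.card : ℝ) ≤ 2 * T.card := by
      have : S.card ≤ 2 * T.card := by
        have h5 : 2 ^ (i₀.1.1 + 2) = 2 * 2 ^ (i₀.1.1 + 1) := by ring
        omega
      exact_mod_cast this
    rw [one_mul, le_div_iff₀ hSpos]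
    linarith
end

section
/- A committee W has Lindahl priceability ratio θ_ℓ equal to the optimal value θ_p of the LP relaxation of the core auditing program; in particular, testing whether W is Lindahl priceable can be done by solving this LP. -/
section LindahlAux

open Finset

variable {H : Type*} [NormedAddCommGroup H] [InnerProductSpace ℝ H]
variable {ι : Type*} [Fintype ι] [DecidableEq ι]

/-- The conical combinations of `v` with support in `s`. -/
def coneOn (v : ι → H) (s : Finset ι) : Set H :=
  {x | ∃ c : ι → ℝ, (∀ i, 0 ≤ c i) ∧ x = ∑ i ∈ s, c i • v i}

/-- The cone generated by the finite family `v`. -/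
def coneOf (v : ι → H) : Set H :=
  {x | ∃ c : ι → ℝ, (∀ i, 0 ≤ c i) ∧ x = ∑ i, c i • v i}

lemma caratheodory_cone (v : ι → H) (s : Finset ι) (c : ι → ℝ)
    (hc : ∀ i, 0 ≤ c i) :
    ∃ t : Finset ι, LinearIndependent ℝ (fun i : t => v i) ∧
      (∑ i ∈ s, c i • v i) ∈ coneOn v t := by
  classical
  induction s using Finset.strongInduction generalizing c with
  | _ s ih =>
    by_cases hind : LinearIndependent ℝ (fun i : s => v i)
    · exact ⟨s, hind, c, hc, rfl⟩
    · -- get a nontrivial dependency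
      rw [Fintype.not_linearIndependent_iff] at hind
      obtain ⟨d, hd0, i1, hi1⟩ := hind
      -- extend d to ι
      set D : ι → ℝ := fun i => if h : i ∈ s then d ⟨i, h⟩ else 0 with hD
      have hDsum : ∑ i ∈ s, D i • v i = 0 := by
        rw [← hd0, ← Finset.sum_attach s (fun i => D i • v i)]
        exact Finset.sum_congr rfl (fun i _ => by simp [hD, i.2])
      have hDne : ∃ i ∈ s, D i ≠ 0 := ⟨i1, i1.2, by simpa [hD, i1.2] using hi1⟩
      -- wlog there is a positive entry
      have key : ∀ e : ι → ℝ, (∀ i, i ∉ s → e i = 0) → (∑ i ∈ s, e i • v i = 0) →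
          (∃ i ∈ s, 0 < e i) →
          ∃ t : Finset ι, LinearIndependent ℝ (fun i : t => v i) ∧
            (∑ i ∈ s, c i • v i) ∈ coneOn v t := by
        intro e he0 hesum ⟨iq, hiqs, hiq⟩
        set Q : Finset ι := s.filter (fun i => 0 < e i) with hQ
        have hQne : Q.Nonempty := ⟨iq, by simp [hQ, hiqs, hiq]⟩
        obtain ⟨i0, hi0Q, hi0min⟩ := Q.exists_min_image (fun i => c i / e i) hQne
        have hi0s : i0 ∈ s := (Finset.mem_filter.1 hi0Q).1
        have hi0pos : 0 < e i0 := (Finset.mem_filter.1 hi0Q).2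
        set lam : ℝ := c i0 / e i0 with hlam
        have hlam0 : 0 ≤ lam := div_nonneg (hc i0) hi0pos.le
        set c' : ι → ℝ := fun i => c i - lam * e i with hc'
        have hc'0 : ∀ i, 0 ≤ c' i := by
          intro i
          by_cases his : i ∈ s
          · by_cases hei : 0 < e i
            · have := hi0min i (Finset.mem_filter.2 ⟨his, hei⟩)
              have : lam * e i ≤ c i := (le_div_iff₀ hei).mp this
              simp only [hc']
              linarith
            · push_neg at hei
              have : lam * e i ≤ 0 := mul_nonpos_of_nonneg_of_nonpos hlam0 hei
              simp only [hc']
              linarith [hc i]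
          · simp only [hc', he0 i his]
            simpa using hc i
        have hc'i0 : c' i0 = 0 := by
          simp only [hc', hlam]
          field_simp
          ring
        have hsum' : ∑ i ∈ s, c' i • v i = ∑ i ∈ s, c i • v i := by
          simp only [hc', sub_smul, mul_smul]
          rw [Finset.sum_sub_distrib, ← Finset.smul_sum, hesum, smul_zero, sub_zero]
        have herase : ∑ i ∈ s.erase i0, c' i • v i = ∑ i ∈ s, c i • v i := by
          rw [← hsum', ← Finset.add_sum_erase s _ hi0s, hc'i0, zero_smul, zero_add]
        obtain ⟨t, hti, htm⟩ := ih (s.erase i0) (Finset.erase_ssubset hi0s) c' hc'0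
        rw [herase] at htm
        exact ⟨t, hti, htm⟩
      rcases hDne with ⟨i1', hi1's, hi1'⟩
      rcases lt_or_gt_of_ne hi1' with hneg | hpos
      · refine key (fun i => -D i) (fun i hi => by simp [hD, hi]) ?_ ⟨i1', hi1's, by show (0:ℝ) < -D i1'; linarith⟩
        simp only [neg_smul, Finset.sum_neg_distrib, hDsum, neg_zero]
      · exact key D (fun i hi => by simp [hD, hi]) hDsum ⟨i1', hi1's, hpos⟩

lemma isClosed_coneOn_of_linearIndependent [FiniteDimensional ℝ H] (v : ι → H) (t : Finset ι)
    (h : LinearIndependent ℝ (fun i : t => v i)) : IsClosed (coneOn v t) := by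
  classical
  let L : (t → ℝ) →ₗ[ℝ] H :=
    { toFun := fun c => ∑ i, c i • v i
      map_add' := by intro a b; simp [add_smul, Finset.sum_add_distrib]
      map_smul' := by intro r a; simp [mul_smul, Finset.smul_sum] }
  have hker : LinearMap.ker L = ⊥ := by
    rw [LinearMap.ker_eq_bot']
    intro g hg
    exact funext (Fintype.linearIndependent_iff.1 h g hg)
  have hemb := LinearMap.isClosedEmbedding_of_injective (f := L) hker
  have himg : coneOn v t = L '' {c : t → ℝ | ∀ i, 0 ≤ c i} := by
    ext x
    constructor
    · rintro ⟨c, hc, rfl⟩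
      refine ⟨fun i => c i, fun i => hc i, ?_⟩
      show ∑ i : t, c i • v i = _
      rw [Finset.univ_eq_attach]
      exact Finset.sum_attach t (fun i => c i • v i)
    · rintro ⟨c, hc, rfl⟩
      refine ⟨fun i => if h : i ∈ t then c ⟨i, h⟩ else 0, ?_, ?_⟩
      · intro i
        by_cases h : i ∈ t
        · simpa [h] using hc ⟨i, h⟩
        · simp [h]
      · show L c = _
        simp only [L, LinearMap.coe_mk, AddHom.coe_mk]
        rw [← Finset.sum_attach t]
        exact Finset.sum_congr rfl (fun i _ => by simp [i.2])
  rw [himg]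
  apply hemb.isClosedMap
  have : {c : t → ℝ | ∀ i, 0 ≤ c i} = ⋂ i, {c : t → ℝ | 0 ≤ c i} := by
    ext c; simp [Set.mem_iInter]
  rw [this]
  exact isClosed_iInter (fun i => isClosed_le continuous_const (continuous_apply i))

lemma isClosed_coneOf [FiniteDimensional ℝ H] (v : ι → H) : IsClosed (coneOf v) := by
  classical
  have : coneOf v = ⋃ t : Finset ι,
      (if LinearIndependent ℝ (fun i : t => v i) then coneOn v t else ∅) := by
    ext x
    simp only [Set.mem_iUnion]
    constructor
    · rintro ⟨c, hc, rfl⟩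
      obtain ⟨t, hti, htm⟩ := caratheodory_cone v Finset.univ c hc
      exact ⟨t, by simp [hti, htm]⟩
    · rintro ⟨t, ht⟩
      by_cases hind : LinearIndependent ℝ (fun i : t => v i)
      · rw [if_pos hind] at ht
        obtain ⟨c, hc, rfl⟩ := ht
        refine ⟨fun i => if i ∈ t then c i else 0, ?_, ?_⟩
        · intro i; by_cases h : i ∈ t <;> simp [h, hc]
        · rw [← Finset.sum_subset (Finset.subset_univ t)]
          · exact Finset.sum_congr rfl (fun i hi => by simp [hi])
          · intro i _ hi; simp [hi]
      · rw [if_neg hind] at ht; exact absurd ht (Set.notMem_empty x)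
  rw [this]
  exact isClosed_iUnion_of_finite (fun t => by
    by_cases hind : LinearIndependent ℝ (fun i : t => v i)
    · rw [if_pos hind]; exact isClosed_coneOn_of_linearIndependent v t hind
    · rw [if_neg hind]; exact isClosed_empty)

open scoped InnerProductSpace in
lemma farkas_lemma {C V : Type*} [Fintype C] [Fintype V] [DecidableEq C] [DecidableEq V]
    (a : C → V → ℝ) (b : C → ℝ)
    (h : ¬ ∃ p : V → ℝ, (∀ v, 0 ≤ p v) ∧ ∀ c, b c ≤ ∑ v, a c v * p v) :
    ∃ μ : C → ℝ, (∀ c, 0 ≤ μ c) ∧ (∀ v, ∑ c, μ c * a c v ≤ 0) ∧ 0 < ∑ c, μ c * b c := by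
  classical
  set g : V ⊕ C → EuclideanSpace ℝ C := Sum.elim (fun v => WithLp.toLp 2 (fun c => a c v : C → ℝ))
    (fun c0 => WithLp.toLp 2 (fun c => if c = c0 then (-1 : ℝ) else 0 : C → ℝ)) with hg
  -- the generated cone as a ConvexCone
  have smul_mem' : ∀ ⦃r : ℝ⦄, 0 < r → ∀ ⦃x : EuclideanSpace ℝ C⦄, x ∈ coneOf g → r • x ∈ coneOf g := by
    rintro r hr x ⟨c, hc, rfl⟩
    exact ⟨fun i => r * c i, fun i => mul_nonneg hr.le (hc i),
      by rw [Finset.smul_sum]; exact Finset.sum_congr rfl (fun i _ => (smul_smul r (c i) (g i)))⟩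
  have add_mem' : ∀ ⦃x : EuclideanSpace ℝ C⦄, x ∈ coneOf g → ∀ ⦃y : EuclideanSpace ℝ C⦄, y ∈ coneOf g → x + y ∈ coneOf g := by
    rintro x ⟨c, hc, rfl⟩ y ⟨d, hd, rfl⟩
    exact ⟨fun i => c i + d i, fun i => add_nonneg (hc i) (hd i),
      by rw [← Finset.sum_add_distrib]; exact Finset.sum_congr rfl (fun i _ => (add_smul _ _ _).symm)⟩
  set K : ConvexCone ℝ (EuclideanSpace ℝ C) := ⟨coneOf g, smul_mem', add_mem'⟩ with hK
  have hKne : (K : Set (EuclideanSpace ℝ C)).Nonempty := ⟨0, ⟨fun _ => 0, fun _ => le_refl 0, by simp⟩⟩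
  have hKcl : IsClosed (K : Set (EuclideanSpace ℝ C)) := isClosed_coneOf g
  have hinner : ∀ x y' : EuclideanSpace ℝ C, ⟪x, y'⟫_ℝ = ∑ c, x c * y' c := fun x y' => by
    simp [PiLp.inner_apply, RCLike.inner_apply, mul_comm]
  have hgen : ∀ i0, g i0 ∈ coneOf g := by
    intro i0
    refine ⟨fun i => if i = i0 then 1 else 0, fun i => by positivity, ?_⟩
    simp only [ite_smul, one_smul, zero_smul, Finset.sum_ite_eq', Finset.mem_univ, if_true]
  have hbK : (WithLp.toLp 2 b : EuclideanSpace ℝ C) ∉ K := by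
    rintro ⟨c, hc, hcb⟩
    apply h
    refine ⟨fun v => c (Sum.inl v), fun v => hc _, fun c0 => ?_⟩
    have hb0 : b c0 = ∑ i, c i * g i c0 := by
      change (WithLp.toLp 2 b : EuclideanSpace ℝ C) c0 = _
      rw [hcb]
      rw [WithLp.ofLp_sum, Finset.sum_apply]
      rfl
    rw [hb0, Fintype.sum_sum_type]
    have h1 : ∀ v : V, c (Sum.inl v) * g (Sum.inl v) c0 = a c0 v * c (Sum.inl v) := by
      intro v; simp [hg, mul_comm]
    have h2 : ∑ j : C, c (Sum.inr j) * g (Sum.inr j) c0 ≤ 0 := by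
      apply Finset.sum_nonpos
      intro j _
      simp only [hg, Sum.elim_inr]
      by_cases hj : c0 = j <;> simp [hj] <;> nlinarith [hc (Sum.inr j)]
    calc ∑ v : V, c (Sum.inl v) * g (Sum.inl v) c0 + ∑ j : C, c (Sum.inr j) * g (Sum.inr j) c0
        ≤ ∑ v : V, c (Sum.inl v) * g (Sum.inl v) c0 := by linarith
      _ = ∑ v : V, a c0 v * c (Sum.inl v) := Finset.sum_congr rfl (fun v _ => h1 v)
  let P : ProperCone ℝ (EuclideanSpace ℝ C) :=
    { carrier := coneOf g
      add_mem' := fun hx hy => add_mem' hx hy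
      zero_mem' := ⟨fun _ => 0, fun _ => le_refl 0, by simp⟩
      smul_mem' := by
        rintro r x ⟨c, hc, rfl⟩
        exact ⟨fun i => r * c i, fun i => mul_nonneg r.2 (hc i),
          by change ((r:ℝ) • (∑ i, c i • g i : EuclideanSpace ℝ C)) = _; rw [Finset.smul_sum]; exact Finset.sum_congr rfl (fun i _ => smul_smul _ _ _)⟩
      isClosed' := hKcl }
  obtain ⟨y, hy1, hy2⟩ :=
    ProperCone.hyperplane_separation' P (x₀ := WithLp.toLp 2 b) (fun hP => hbK hP)
  refine ⟨fun c => -y c, ?_, ?_, ?_⟩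
  · intro c
    have h0 := hy1 _ (hgen (Sum.inr c))
    rw [hinner] at h0
    simp only [hg, Sum.elim_inr, ite_mul, zero_mul, neg_mul, one_mul,
      Finset.sum_ite_eq', Finset.mem_univ, if_true] at h0
    show (0:ℝ) ≤ -y c
    linarith
  · intro v
    have h0 := hy1 _ (hgen (Sum.inl v))
    rw [hinner] at h0
    simp only [hg, Sum.elim_inl] at h0
    have heq : ∑ c, (fun c => -y c) c * a c v = -∑ c, a c v * y c := by
      rw [← Finset.sum_neg_distrib]
      exact Finset.sum_congr rfl (fun c _ => by ring)
    rw [heq]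
    linarith
  · rw [hinner] at hy2
    simp only [WithLp.ofLp_toLp] at hy2
    rw [Finset.sum_congr rfl (fun c _ => mul_comm (b c) (y c))] at hy2
    have heq : ∑ c, (fun c => -y c) c * b c = -∑ c, y c * b c := by
      rw [← Finset.sum_neg_distrib]
      exact Finset.sum_congr rfl (fun c _ => by ring)
    rw [heq]
    linarith


lemma greedy_min {J : Type*} [DecidableEq J] (B : Finset J) (cst w : J → ℝ) (r : ℕ) (zi : ℝ)
    (hzi : 0 < zi) (hcst : ∀ j ∈ B, 0 ≤ cst j) (hw0 : ∀ j ∈ B, 0 ≤ w j)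
    (hw1 : ∀ j ∈ B, w j ≤ zi) (hsum : zi * r ≤ ∑ j ∈ B, w j) (hr : r ≤ B.card) :
    ∃ S ⊆ B, S.card = r ∧ zi * ∑ j ∈ S, cst j ≤ ∑ j ∈ B, w j * cst j := by
  classical
  have hwc0 : 0 ≤ ∑ j ∈ B, w j * cst j :=
    Finset.sum_nonneg (fun j hj => mul_nonneg (hw0 j hj) (hcst j hj))
  rcases Nat.eq_zero_or_pos r with hr0 | hrpos
  · exact ⟨∅, Finset.empty_subset B, by simp [hr0], by simpa using hwc0⟩
  -- pick a minimizing subset of size r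
  set F : Finset (Finset J) := B.powerset.filter (fun S => S.card = r) with hF
  have hFne : F.Nonempty := by
    obtain ⟨t, ht, htc⟩ := Finset.exists_subset_card_eq hr
    exact ⟨t, Finset.mem_filter.2 ⟨Finset.mem_powerset.2 ht, htc⟩⟩
  obtain ⟨S, hSF, hSmin⟩ := F.exists_min_image (fun S => ∑ j ∈ S, cst j) hFne
  have hSB : S ⊆ B := Finset.mem_powerset.1 (Finset.mem_filter.1 hSF).1
  have hScard : S.card = r := (Finset.mem_filter.1 hSF).2
  have hSne : S.Nonempty := Finset.card_pos.1 (hScard ▸ hrpos)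
  obtain ⟨jm, hjmS, hjmax⟩ := S.exists_max_image cst hSne
  set τ : ℝ := cst jm with hτ
  have hτ0 : 0 ≤ τ := hcst jm (hSB hjmS)
  -- exchange: outside B \ S, costs are at least τ
  have hout : ∀ j ∈ B \ S, τ ≤ cst j := by
    intro j hj
    rw [Finset.mem_sdiff] at hj
    set S' : Finset J := insert j (S.erase jm) with hS'
    have hjnot : j ∉ S.erase jm := fun h => hj.2 (Finset.mem_of_mem_erase h)
    have hS'F : S' ∈ F := by
      refine Finset.mem_filter.2 ⟨Finset.mem_powerset.2 ?_, ?_⟩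
      · intro x hx
        rcases Finset.mem_insert.1 hx with rfl | hx
        · exact hj.1
        · exact hSB (Finset.mem_of_mem_erase hx)
      · rw [hS', Finset.card_insert_of_notMem hjnot, Finset.card_erase_of_mem hjmS, hScard]
        omega
    have h1 : ∑ x ∈ S, cst x ≤ ∑ x ∈ S', cst x := hSmin S' hS'F
    have h2 : ∑ x ∈ S', cst x = cst j + ∑ x ∈ S.erase jm, cst x :=
      Finset.sum_insert hjnot
    have h3 : ∑ x ∈ S, cst x = cst jm + ∑ x ∈ S.erase jm, cst x :=
      (Finset.add_sum_erase S cst hjmS).symm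
    rw [h2, h3] at h1
    linarith
  refine ⟨S, hSB, hScard, ?_⟩
  have e1 : ∑ j ∈ B, w j * cst j
      = ∑ j ∈ B, w j * (cst j - τ) + τ * ∑ j ∈ B, w j := by
    rw [Finset.mul_sum, ← Finset.sum_add_distrib]
    exact Finset.sum_congr rfl (fun j _ => by ring)
  have hsplit : ∑ j ∈ B \ S, w j * (cst j - τ) + ∑ j ∈ S, w j * (cst j - τ)
      = ∑ j ∈ B, w j * (cst j - τ) := Finset.sum_sdiff hSB
  have h4 : 0 ≤ ∑ j ∈ B \ S, w j * (cst j - τ) :=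
    Finset.sum_nonneg (fun j hj => mul_nonneg (hw0 j (Finset.mem_sdiff.1 hj).1)
      (by linarith [hout j hj]))
  have h5 : ∑ j ∈ S, zi * (cst j - τ) ≤ ∑ j ∈ S, w j * (cst j - τ) := by
    refine Finset.sum_le_sum (fun j hj => ?_)
    have hc : cst j - τ ≤ 0 := by have := hjmax j hj; simp only [hτ]; linarith
    exact mul_le_mul_of_nonpos_right (hw1 j (hSB hj)) hc
  have h6 : ∑ j ∈ S, zi * (cst j - τ) = zi * ∑ j ∈ S, cst j - zi * (r * τ) := by
    rw [← Finset.mul_sum, Finset.sum_sub_distrib, Finset.sum_const, hScard]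
    push_cast
    ring
  have h7 : τ * (zi * r) ≤ τ * ∑ j ∈ B, w j := mul_le_mul_of_nonneg_left hsum hτ0
  have h8 : zi * (r * τ) = τ * (zi * r) := by ring
  linarith

end LindahlAux

/-- The Lindahl priceability ratio `θ_ℓ` of a committee `W` equals the optimal value
`θ_p` of the LP relaxation of the core auditing program; in particular, testing Lindahl
priceability reduces to solving this LP. -/
theorem lindahl_ratio_eq_lp_value
    (n m k : ℕ) (hn : 0 < n) (hm : 0 < m) (hk : 0 < k)
    (A : Fin n → Finset (Fin m)) (W : Finset (Fin m)) (hW : W.card ≤ k) :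
    sSup {θ : ℝ | 0 ≤ θ ∧ ∃ p : Fin n → Fin m → ℝ,
        (∀ i j, 0 ≤ p i j) ∧
        (∀ j, ∑ i, p i j ≤ (n : ℝ) / k) ∧
        ∀ (i : Fin n) (T : Finset (Fin m)),
          (W ∩ A i).card + 1 ≤ (T ∩ A i).card → θ < ∑ j ∈ T, p i j}
    = sInf {v : ℝ | ∃ (x : Fin m → ℝ) (z : Fin n → ℝ) (y : Fin n → Fin m → ℝ),
        (∀ j, 0 ≤ x j) ∧ (∀ i, 0 ≤ z i) ∧ (∀ i j, 0 ≤ y i j) ∧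
        (∀ i j, y i j ≤ x j) ∧ (∀ i j, y i j ≤ z i) ∧
        (∀ i, z i * (((W ∩ A i).card : ℝ) + 1) ≤ ∑ j ∈ A i, y i j) ∧
        (1 : ℝ) ≤ ∑ i, z i ∧
        v = (n : ℝ) / k * (∑ j, x j) / (∑ i, z i)} := by
  classical
  have hRpos : (0 : ℝ) < (n : ℝ) / k := by positivity
  set Sp : Set ℝ := {θ : ℝ | 0 ≤ θ ∧ ∃ p : Fin n → Fin m → ℝ,
        (∀ i j, 0 ≤ p i j) ∧
        (∀ j, ∑ i, p i j ≤ (n : ℝ) / k) ∧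
        ∀ (i : Fin n) (T : Finset (Fin m)),
          (W ∩ A i).card + 1 ≤ (T ∩ A i).card → θ < ∑ j ∈ T, p i j} with hSp
  set Sd : Set ℝ := {v : ℝ | ∃ (x : Fin m → ℝ) (z : Fin n → ℝ) (y : Fin n → Fin m → ℝ),
        (∀ j, 0 ≤ x j) ∧ (∀ i, 0 ≤ z i) ∧ (∀ i j, 0 ≤ y i j) ∧
        (∀ i j, y i j ≤ x j) ∧ (∀ i j, y i j ≤ z i) ∧
        (∀ i, z i * (((W ∩ A i).card : ℝ) + 1) ≤ ∑ j ∈ A i, y i j) ∧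
        (1 : ℝ) ≤ ∑ i, z i ∧
        v = (n : ℝ) / k * (∑ j, x j) / (∑ i, z i)} with hSd
  by_cases hact : ∃ i : Fin n, (W ∩ A i).card < (A i).card
  swap
  · -- degenerate case: every approved set is inside W; both sides are 0
    push_neg at hact
    have hSdempty : Sd = ∅ := by
      rw [Set.eq_empty_iff_forall_notMem]
      rintro v ⟨x, z, y, hx, hz, hy, hyx, hyz, hcon, hzsum, hv⟩
      have hzzero : ∀ i, z i = 0 := by
        intro i
        have h1 := hcon i
        have h2 : ∑ j ∈ A i, y i j ≤ ∑ j ∈ A i, z i :=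
          Finset.sum_le_sum (fun j _ => hyz i j)
        rw [Finset.sum_const, nsmul_eq_mul] at h2
        have h3 : ((A i).card : ℝ) ≤ ((W ∩ A i).card : ℝ) := by
          exact_mod_cast hact i
        nlinarith [hz i]
      have : ∑ i, z i = 0 := Finset.sum_eq_zero (fun i _ => hzzero i)
      rw [this] at hzsum
      linarith
    have hSpall : ∀ θ : ℝ, 0 ≤ θ → θ ∈ Sp := by
      intro θ hθ
      refine ⟨hθ, fun _ _ => 0, fun _ _ => le_refl 0, fun j => by simp [le_of_lt hRpos], ?_⟩
      intro i T hT
      exfalso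
      have h1 : (T ∩ A i).card ≤ (A i).card :=
        Finset.card_le_card (Finset.inter_subset_right)
      have := hact i
      omega
    have hnb : ¬ BddAbove Sp := by
      rintro ⟨b, hb⟩
      have h1 : max b 0 + 1 ∈ Sp := hSpall _ (by positivity)
      have := hb h1
      have : b ≤ max b 0 := le_max_left b 0
      linarith [hb h1]
    rw [hSdempty, Real.sInf_empty, Real.sSup_of_not_bddAbove hnb]
  · obtain ⟨i0, hi0⟩ := hact
    -- weak duality
    have hweak : ∀ θ ∈ Sp, ∀ v ∈ Sd, θ ≤ v := by
      rintro θ ⟨hθ0, p, hp0, hpcol, hpT⟩ v ⟨x, z, y, hx, hz, hy, hyx, hyz, hcon, hzsum, rfl⟩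
      have hzpos : (0 : ℝ) < ∑ i, z i := lt_of_lt_of_le one_pos hzsum
      have key : ∀ i : Fin n, θ * z i ≤ ∑ j ∈ A i, y i j * p i j := by
        intro i
        rcases eq_or_lt_of_le (hz i) with hzi | hzi
        · rw [← hzi, mul_zero]
          exact Finset.sum_nonneg (fun j hj => mul_nonneg (hy i j) (hp0 i j))
        · -- z i > 0; first derive (W ∩ A i).card + 1 ≤ (A i).card
          have h2 : ∑ j ∈ A i, y i j ≤ ((A i).card : ℝ) * z i := by
            calc ∑ j ∈ A i, y i j ≤ ∑ j ∈ A i, z i :=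
                  Finset.sum_le_sum (fun j _ => hyz i j)
              _ = ((A i).card : ℝ) * z i := by rw [Finset.sum_const, nsmul_eq_mul]
          have h3 : (((W ∩ A i).card : ℝ) + 1) * z i ≤ ((A i).card : ℝ) * z i := by
            have := hcon i
            nlinarith
          have h4 : (((W ∩ A i).card : ℝ) + 1) ≤ ((A i).card : ℝ) :=
            (mul_le_mul_iff_of_pos_right hzi).1 h3
          have hr : (W ∩ A i).card + 1 ≤ (A i).card := by exact_mod_cast h4
          obtain ⟨S, hSB, hScard, hSle⟩ := greedy_min (A i) (p i) (y i)
            ((W ∩ A i).card + 1) (z i) hzi (fun j _ => hp0 i j) (fun j _ => hy i j)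
            (fun j _ => hyz i j) (by push_cast; linarith [hcon i]) hr
          have hθS : θ < ∑ j ∈ S, p i j := by
            apply hpT i S
            rw [Finset.inter_eq_left.2 hSB, hScard]
          calc θ * z i ≤ (∑ j ∈ S, p i j) * z i :=
                mul_le_mul_of_nonneg_right hθS.le (hz i)
            _ = z i * ∑ j ∈ S, p i j := mul_comm _ _
            _ ≤ ∑ j ∈ A i, y i j * p i j := hSle
      have main : θ * (∑ i, z i) ≤ (n : ℝ) / k * (∑ j, x j) := by
        calc θ * (∑ i, z i) = ∑ i, θ * z i := Finset.mul_sum _ _ _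
          _ ≤ ∑ i, ∑ j ∈ A i, y i j * p i j := Finset.sum_le_sum (fun i _ => key i)
          _ ≤ ∑ i, ∑ j, y i j * p i j := by
              refine Finset.sum_le_sum (fun i _ => ?_)
              exact Finset.sum_le_sum_of_subset_of_nonneg (Finset.subset_univ (A i))
                (fun j _ _ => mul_nonneg (hy i j) (hp0 i j))
          _ = ∑ j, ∑ i, y i j * p i j := Finset.sum_comm
          _ ≤ ∑ j, (n : ℝ) / k * x j := by
              refine Finset.sum_le_sum (fun j _ => ?_)
              calc ∑ i, y i j * p i j ≤ ∑ i, x j * p i j :=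
                    Finset.sum_le_sum (fun i _ =>
                      mul_le_mul_of_nonneg_right (hyx i j) (hp0 i j))
                _ = x j * ∑ i, p i j := (Finset.mul_sum _ _ _).symm
                _ ≤ x j * ((n : ℝ) / k) := mul_le_mul_of_nonneg_left (hpcol j) (hx j)
                _ = (n : ℝ) / k * x j := mul_comm _ _
          _ = (n : ℝ) / k * (∑ j, x j) := (Finset.mul_sum _ _ _).symm
      rw [le_div_iff₀ hzpos]
      exact main
    -- nonemptiness of both sets
    have hSpne : (0 : ℝ) ∈ Sp := by
      refine ⟨le_refl 0, fun i j => (n : ℝ) / k / n, fun i j => by positivity, ?_, ?_⟩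
      · intro j
        rw [Finset.sum_const, Finset.card_univ, Fintype.card_fin, nsmul_eq_mul]
        rw [mul_div_assoc']
        rw [mul_comm, mul_div_assoc, div_self (by exact_mod_cast hn.ne' : (n:ℝ) ≠ 0), mul_one]
      · intro i T hT
        have hTA : (T ∩ A i).Nonempty := by
          rw [← Finset.card_pos]; omega
        obtain ⟨j0, hj0⟩ := hTA
        have hj0T : j0 ∈ T := (Finset.mem_inter.1 hj0).1
        have : (0:ℝ) < (n : ℝ) / k / n := by positivity
        calc (0:ℝ) < (n : ℝ) / k / n := this
          _ ≤ ∑ j ∈ T, (n : ℝ) / k / n := Finset.single_le_sum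
              (f := fun _ : Fin m => (n : ℝ) / k / n) (fun j _ => by positivity) hj0T
    have hSdne : Sd.Nonempty := by
      refine ⟨_, fun _ => 1, fun i => if i = i0 then 1 else 0,
        fun i j => if i = i0 then 1 else 0, fun j => zero_le_one, ?_, ?_, ?_, ?_, ?_, ?_, rfl⟩
      · intro i; dsimp only; split <;> norm_num
      · intro i j; dsimp only; split <;> norm_num
      · intro i j; dsimp only; split <;> norm_num
      · intro i j; exact le_refl _
      · intro i
        dsimp only
        by_cases hi : i = i0
        · rw [hi]
          simp only [eq_self_iff_true, if_true, one_mul, Finset.sum_const, nsmul_eq_mul, mul_one]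
          exact_mod_cast hi0
        · simp [hi]
      · rw [Finset.sum_ite_eq' Finset.univ i0 (fun _ => (1:ℝ))]
        simp
    have hSdnonneg : ∀ v ∈ Sd, 0 ≤ v := by
      rintro v ⟨x, z, y, hx, hz, hy, hyx, hyz, hcon, hzsum, rfl⟩
      have hzpos : (0 : ℝ) < ∑ i, z i := lt_of_lt_of_le one_pos hzsum
      have hxs : (0:ℝ) ≤ ∑ j, x j := Finset.sum_nonneg (fun j _ => hx j)
      positivity
    have hbddSd : BddBelow Sd := ⟨0, fun v hv => hSdnonneg v hv⟩
    have hbddSp : BddAbove Sp := by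
      obtain ⟨v0, hv0⟩ := hSdne
      exact ⟨v0, fun θ hθ => hweak θ hθ v0 hv0⟩
    have hsupnn : 0 ≤ sSup Sp := le_csSup hbddSp hSpne
    -- easy inequality
    have h1 : sSup Sp ≤ sInf Sd :=
      csSup_le ⟨0, hSpne⟩ (fun θ hθ => le_csInf hSdne (fun v hv => hweak θ hθ v hv))
    -- hard inequality via Farkas
    have h2 : sInf Sd ≤ sSup Sp := by
      apply le_of_forall_pos_le_add
      intro ε hε
      set V' : ℝ := sSup Sp with hV'
      -- the strict system is infeasible
      set valid : Fin n × Finset (Fin m) → Prop :=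
        fun c => c.2 ⊆ A c.1 ∧ c.2.card = (W ∩ A c.1).card + 1 with hvalid
      set a : (Fin n × Finset (Fin m)) ⊕ Fin m → Fin n × Fin m → ℝ :=
        Sum.elim
          (fun c v => if valid c ∧ c.1 = v.1 ∧ v.2 ∈ c.2 then 1 else 0)
          (fun j0 v => if v.2 = j0 then -1 else 0) with ha
      set b : (Fin n × Finset (Fin m)) ⊕ Fin m → ℝ :=
        Sum.elim (fun c => if valid c then V' + ε else 0) (fun _ => -((n : ℝ) / k)) with hb
      have hinfeas : ¬ ∃ p : Fin n × Fin m → ℝ, (∀ v, 0 ≤ p v) ∧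
          ∀ c, b c ≤ ∑ v, a c v * p v := by
        rintro ⟨p, hp0, hpc⟩
        have hcol : ∀ j0 : Fin m, ∑ i, p (i, j0) ≤ (n : ℝ) / k := by
          intro j0
          have := hpc (Sum.inr j0)
          simp only [hb, ha, Sum.elim_inr] at this
          rw [Fintype.sum_prod_type] at this
          have heval : ∀ i : Fin n, ∑ j, (if j = j0 then (-1:ℝ) else 0) * p (i, j)
              = -p (i, j0) := by
            intro i
            rw [Finset.sum_congr rfl (fun j _ => by
              rw [ite_mul, zero_mul, neg_mul, one_mul] :
              ∀ j ∈ Finset.univ, (if j = j0 then (-1:ℝ) else 0) * p (i, j)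
                = if j = j0 then -p (i, j) else 0)]
            rw [Finset.sum_ite_eq' Finset.univ j0 (fun j => -p (i, j))]
            simp
          rw [Finset.sum_congr rfl (fun i _ => heval i), Finset.sum_neg_distrib] at this
          linarith
        have hrow : ∀ c : Fin n × Finset (Fin m), valid c →
            V' + ε ≤ ∑ j ∈ c.2, p (c.1, j) := by
          intro c hc
          have := hpc (Sum.inl c)
          simp only [hb, ha, Sum.elim_inl, if_pos hc] at this
          rw [Fintype.sum_prod_type] at this
          have heval : ∀ i : Fin n,
              ∑ j, (if valid c ∧ c.1 = i ∧ j ∈ c.2 then (1:ℝ) else 0) * p (i, j)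
              = if c.1 = i then ∑ j ∈ c.2, p (i, j) else 0 := by
            intro i
            by_cases hci : c.1 = i
            · rw [if_pos hci]
              rw [Finset.sum_congr rfl (fun j _ => by
                by_cases hj : j ∈ c.2
                · rw [if_pos ⟨hc, hci, hj⟩, one_mul, if_pos hj]
                · rw [if_neg (fun h => hj h.2.2), zero_mul, if_neg hj] :
                ∀ j ∈ Finset.univ, (if valid c ∧ c.1 = i ∧ j ∈ c.2 then (1:ℝ) else 0) * p (i, j)
                  = if j ∈ c.2 then p (i, j) else 0)]
              rw [Finset.sum_ite_mem, Finset.univ_inter]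
            · rw [if_neg hci]
              apply Finset.sum_eq_zero
              intro j _
              rw [if_neg (fun h => hci h.2.1), zero_mul]
          rw [Finset.sum_congr rfl (fun i _ => heval i)] at this
          rw [Finset.sum_ite_eq Finset.univ c.1 (fun i => ∑ j ∈ c.2, p (i, j))] at this
          simpa using this
        -- build an element of Sp exceeding its sup
        have hmem : V' + ε / 2 ∈ Sp := by
          refine ⟨by linarith, fun i j => p (i, j), fun i j => hp0 (i, j), hcol, ?_⟩
          intro i T hT
          obtain ⟨S, hST, hScard⟩ := Finset.exists_subset_card_eq
            (le_trans hT (le_refl _)) (s := T ∩ A i)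
          have hSA : S ⊆ A i := hST.trans Finset.inter_subset_right
          have hv : valid (i, S) := ⟨hSA, hScard⟩
          have h5 := hrow (i, S) hv
          have h6 : ∑ j ∈ S, p (i, j) ≤ ∑ j ∈ T, p (i, j) :=
            Finset.sum_le_sum_of_subset_of_nonneg
              (hST.trans Finset.inter_subset_left) (fun j _ _ => hp0 (i, j))
          simp only at h5
          linarith
        have := le_csSup hbddSp hmem
        rw [← hV'] at this
        linarith
      obtain ⟨μ, hμ0, hμa, hμb⟩ := farkas_lemma a b hinfeas
      -- extract dual variables
      set ν : Fin m → ℝ := fun j => μ (Sum.inr j) with hν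
      set zraw : Fin n → ℝ := fun i =>
        ∑ c : Fin n × Finset (Fin m), if valid c ∧ c.1 = i then μ (Sum.inl c) else 0 with hzraw
      set yraw : Fin n → Fin m → ℝ := fun i j =>
        ∑ c : Fin n × Finset (Fin m),
          if valid c ∧ c.1 = i ∧ j ∈ c.2 then μ (Sum.inl c) else 0 with hyraw
      set Z : ℝ := ∑ i, zraw i with hZ
      have hν0 : ∀ j, 0 ≤ ν j := fun j => hμ0 (Sum.inr j)
      have hzraw0 : ∀ i, 0 ≤ zraw i := fun i =>
        Finset.sum_nonneg (fun c _ => by split <;> [exact hμ0 _; exact le_refl 0])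
      have hyraw0 : ∀ i j, 0 ≤ yraw i j := fun i j =>
        Finset.sum_nonneg (fun c _ => by split <;> [exact hμ0 _; exact le_refl 0])
      have hyz : ∀ i j, yraw i j ≤ zraw i := by
        intro i j
        refine Finset.sum_le_sum (fun c _ => ?_)
        by_cases h : valid c ∧ c.1 = i ∧ j ∈ c.2
        · rw [if_pos h, if_pos ⟨h.1, h.2.1⟩]
        · rw [if_neg h]
          split <;> [exact hμ0 _; exact le_refl 0]
      have hyx : ∀ i j, yraw i j ≤ ν j := by
        intro i j
        have := hμa (i, j)
        rw [Fintype.sum_sum_type] at this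
        have e1 : ∑ c : Fin n × Finset (Fin m), μ (Sum.inl c) * a (Sum.inl c) (i, j)
            = yraw i j := by
          refine Finset.sum_congr rfl (fun c _ => ?_)
          simp only [ha, Sum.elim_inl]
          rw [mul_ite, mul_one, mul_zero]
        have e2 : ∑ j0 : Fin m, μ (Sum.inr j0) * a (Sum.inr j0) (i, j) = -ν j := by
          rw [Finset.sum_congr rfl (fun j0 _ => by
            simp only [ha, Sum.elim_inr]
            rw [mul_ite, mul_neg, mul_one, mul_zero] :
            ∀ j0 ∈ Finset.univ, μ (Sum.inr j0) * a (Sum.inr j0) (i, j)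
              = if j = j0 then -μ (Sum.inr j0) else 0)]
          rw [Finset.sum_ite_eq Finset.univ j (fun j0 => -μ (Sum.inr j0))]
          simp [hν]
        rw [e1, e2] at this
        linarith
      have hconstraint : ∀ i, ∑ j ∈ A i, yraw i j
          = (((W ∩ A i).card : ℝ) + 1) * zraw i := by
        intro i
        have e1 : ∑ j ∈ A i, yraw i j
            = ∑ c : Fin n × Finset (Fin m), ∑ j ∈ A i,
              (if valid c ∧ c.1 = i ∧ j ∈ c.2 then μ (Sum.inl c) else 0) :=
          Finset.sum_comm
        rw [e1, hzraw, Finset.mul_sum]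
        refine Finset.sum_congr rfl (fun c _ => ?_)
        by_cases h : valid c ∧ c.1 = i
        · have hsub : c.2 ⊆ A i := h.2 ▸ h.1.1
          have e2 : ∀ j ∈ A i, (if valid c ∧ c.1 = i ∧ j ∈ c.2 then μ (Sum.inl c) else 0)
              = if j ∈ c.2 then μ (Sum.inl c) else 0 := by
            intro j _
            by_cases hj2 : j ∈ c.2
            · rw [if_pos ⟨h.1, h.2, hj2⟩, if_pos hj2]
            · rw [if_neg (fun hh => hj2 hh.2.2), if_neg hj2]
          rw [Finset.sum_congr rfl e2, Finset.sum_ite_mem,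
            Finset.inter_eq_right.2 hsub, Finset.sum_const, nsmul_eq_mul, if_pos h]
          have hcard : c.2.card = (W ∩ A i).card + 1 := by rw [← h.2]; exact h.1.2
          rw [hcard]
          push_cast
          ring
        · rw [if_neg h, mul_zero]
          apply Finset.sum_eq_zero
          intro j _
          rw [if_neg (fun hh => h ⟨hh.1, hh.2.1⟩)]
      -- total mass of the left multipliers
      have hZalt : Z = ∑ c : Fin n × Finset (Fin m),
          (if valid c then μ (Sum.inl c) else 0) := by
        rw [hZ]
        have : ∀ i, zraw i = ∑ c : Fin n × Finset (Fin m),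
            (if valid c ∧ c.1 = i then μ (Sum.inl c) else 0) := fun i => rfl
        rw [Finset.sum_congr rfl (fun i _ => this i), Finset.sum_comm]
        refine Finset.sum_congr rfl (fun c _ => ?_)
        by_cases hv : valid c
        · rw [if_pos hv]
          have : ∀ i ∈ Finset.univ, (if valid c ∧ c.1 = i then μ (Sum.inl c) else 0)
              = if c.1 = i then μ (Sum.inl c) else 0 := by
            intro i _
            by_cases hi : c.1 = i
            · rw [if_pos ⟨hv, hi⟩, if_pos hi]
            · rw [if_neg (fun hh => hi hh.2), if_neg hi]
          rw [Finset.sum_congr rfl this, Finset.sum_ite_eq Finset.univ c.1]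
          simp
        · rw [if_neg hv]
          apply Finset.sum_eq_zero
          intro i _
          rw [if_neg (fun hh => hv hh.1)]
      have hsumb : ∑ c, μ c * b c = (V' + ε) * Z - (n : ℝ) / k * ∑ j, ν j := by
        rw [Fintype.sum_sum_type]
        have e1 : ∑ c : Fin n × Finset (Fin m), μ (Sum.inl c) * b (Sum.inl c)
            = (V' + ε) * Z := by
          rw [hZalt, Finset.mul_sum]
          refine Finset.sum_congr rfl (fun c _ => ?_)
          simp only [hb, Sum.elim_inl]
          by_cases hv : valid c
          · rw [if_pos hv, if_pos hv]; ring
          · rw [if_neg hv, if_neg hv]; ring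
        have e2 : ∑ j : Fin m, μ (Sum.inr j) * b (Sum.inr j)
            = -((n : ℝ) / k * ∑ j, ν j) := by
          rw [Finset.mul_sum, ← Finset.sum_neg_distrib]
          refine Finset.sum_congr rfl (fun j _ => ?_)
          simp only [hb, hν, Sum.elim_inr]
          ring
        rw [e1, e2]
        ring
      rw [hsumb] at hμb
      have hνsum : (0:ℝ) ≤ ∑ j, ν j := Finset.sum_nonneg (fun j _ => hν0 j)
      have hZnn : (0:ℝ) ≤ Z := Finset.sum_nonneg (fun i _ => hzraw0 i)
      have hZpos : 0 < Z := by
        rcases eq_or_lt_of_le hZnn with hz0 | hz0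
        · exfalso
          rw [← hz0, mul_zero] at hμb
          nlinarith [mul_nonneg hRpos.le hνsum]
        · exact hz0
      -- the scaled dual solution
      have hmemd : (n : ℝ) / k * (∑ j, ν j / Z) / (∑ i, zraw i / Z) ∈ Sd := by
        refine ⟨fun j => ν j / Z, fun i => zraw i / Z, fun i j => yraw i j / Z,
          fun j => div_nonneg (hν0 j) hZnn,
          fun i => div_nonneg (hzraw0 i) hZnn,
          fun i j => div_nonneg (hyraw0 i j) hZnn,
          fun i j => (div_le_div_iff_of_pos_right hZpos).2 (hyx i j),
          fun i j => (div_le_div_iff_of_pos_right hZpos).2 (hyz i j),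
          ?_, ?_, rfl⟩
        · intro i
          rw [← Finset.sum_div, hconstraint i]
          rw [div_mul_eq_mul_div, mul_comm]
        · rw [← Finset.sum_div, ← hZ, div_self hZpos.ne']
      have hzsum1 : ∑ i, zraw i / Z = 1 := by
        rw [← Finset.sum_div, ← hZ, div_self hZpos.ne']
      have hval : (n : ℝ) / k * (∑ j, ν j / Z) / (∑ i, zraw i / Z) ≤ V' + ε := by
        rw [hzsum1, div_one, ← Finset.sum_div, mul_div_assoc']
        rw [div_le_iff₀ hZpos]
        nlinarith
      exact (csInf_le hbddSd hmemd).trans hval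
    exact le_antisymm h1 h2
end

section
/- In the reduction from 3-regular maximal independent set: given a 3-regular graph G = (U, E) augmented by a new vertex s adjacent to every u ∈ U, form the approval election where candidates are vertices and each edge is a voter approving its two endpoints, with k = (|E| + |U|)(q+1)/(q(D+1)) and D = 3. If G has an independent set of size q, then the committee W = {s} does not lie in the sub-core. -/
attribute [local instance] Classical.propDecidable

/-- Approval sets of the election constructed from a graph `G` augmented by an apex
vertex `s` (encoded as `none : Option V`): the voters are the edges of `G` together with
the apex edges (one per vertex of `V`), each approving its two endpoint candidates. -/
noncomputable def redApprove {V : Type} [Fintype V] [DecidableEq V]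
    (G : SimpleGraph V) [DecidableRel G.Adj] :
    (↥G.edgeFinset ⊕ V) → Finset (Option V)
  | Sum.inl e => Finset.univ.filter (fun c => ∃ u, c = some u ∧ u ∈ (e.1 : Sym2 V))
  | Sum.inr u => {none, some u}

/-- 'YES' direction of the 3-regular maximal independent set reduction: if the 3-regular
graph `G` has an independent set of size `q`, then in the constructed approval election
(with `n = |E| + |U|` voters and `k = n(q+1)/(q(D+1))`, `D = 3`) the committee
`W = {s}` does not lie in the sub-core. -/
theorem independent_set_gives_subcore_deviation
    {V : Type} [Fintype V] [DecidableEq V]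
    (G : SimpleGraph V) [DecidableRel G.Adj]
    (hreg : G.IsRegularOfDegree 3)
    (q : ℕ) (hq : 1 ≤ q)
    (I : Finset V) (hIcard : I.card = q)
    (hind : ∀ u ∈ I, ∀ v ∈ I, ¬ G.Adj u v) :
    ∃ (S : Finset (↥G.edgeFinset ⊕ V)) (T : Finset (Option V)),
      S.Nonempty ∧
      (T.card : ℝ) ≤ (S.card : ℝ) *
        (((G.edgeFinset.card + Fintype.card V : ℕ) : ℝ) * (q + 1) / (q * (3 + 1))) /
        ((G.edgeFinset.card + Fintype.card V : ℕ) : ℝ) ∧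
      ∀ i ∈ S, redApprove G i ∩ ({none} : Finset (Option V)) ⊂ redApprove G i ∩ T := by
  classical
  -- edges incident to I
  set EI : Finset (Sym2 V) := I.biUnion (fun u => G.incidenceFinset u) with hEI
  have hEIcard : EI.card = 3 * q := by
    rw [hEI, Finset.card_biUnion]
    · have : ∀ u ∈ I, (G.incidenceFinset u).card = 3 := by
        intro u _
        rw [SimpleGraph.card_incidenceFinset_eq_degree]
        exact hreg u
      rw [Finset.sum_congr rfl this, Finset.sum_const, hIcard, smul_eq_mul, mul_comm]
    · intro u hu v hv huv
      rw [Function.onFun, Finset.disjoint_left]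
      intro e heu hev
      rw [SimpleGraph.mem_incidenceFinset] at heu hev
      exact hind u hu v hv (G.adj_of_mem_incidenceSet huv heu hev)
  set S1 : Finset (↥G.edgeFinset) :=
    Finset.univ.filter (fun e => ∃ u ∈ I, u ∈ (e.1 : Sym2 V)) with hS1
  have hS1card : S1.card = 3 * q := by
    rw [← hEIcard]
    refine Finset.card_bij (fun e _ => (e : Sym2 V)) ?_ ?_ ?_
    · intro e he
      simp only [hS1, Finset.mem_filter] at he
      obtain ⟨-, u, hu, hue⟩ := he
      simp only [hEI, Finset.mem_biUnion]
      exact ⟨u, hu, by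
        rw [SimpleGraph.mem_incidenceFinset]
        exact ⟨(SimpleGraph.mem_edgeFinset).1 e.2, hue⟩⟩
    · intro a _ b _ h
      exact Subtype.ext h
    · intro e he
      simp only [hEI, Finset.mem_biUnion] at he
      obtain ⟨u, hu, hue⟩ := he
      rw [SimpleGraph.mem_incidenceFinset] at hue
      refine ⟨⟨e, (SimpleGraph.mem_edgeFinset).2 hue.1⟩, ?_, rfl⟩
      simp only [hS1, Finset.mem_filter]
      exact ⟨Finset.mem_univ _, u, hu, hue.2⟩
  set S : Finset (↥G.edgeFinset ⊕ V) :=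
    S1.image Sum.inl ∪ I.image Sum.inr with hS
  have hScard : S.card = 4 * q := by
    rw [hS, Finset.card_union_of_disjoint, Finset.card_image_of_injective _ Sum.inl_injective,
      Finset.card_image_of_injective _ Sum.inr_injective, hS1card, hIcard]
    · ring
    · rw [Finset.disjoint_left]
      rintro x hx hy
      simp only [Finset.mem_image] at hx hy
      obtain ⟨a, -, rfl⟩ := hx
      obtain ⟨b, -, hb⟩ := hy
      exact Sum.inl_ne_inr hb.symm
  set T : Finset (Option V) := insert none (I.image some) with hT
  have hTcard : T.card = q + 1 := by
    rw [hT, Finset.card_insert_of_notMem, Finset.card_image_of_injective _ (Option.some_injective V), hIcard]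
    simp
  obtain ⟨v0, hv0⟩ : I.Nonempty := Finset.card_pos.1 (by omega)
  have hVpos : 0 < Fintype.card V := Fintype.card_pos_iff.2 ⟨v0⟩
  refine ⟨S, T, ?_, ?_, ?_⟩
  · exact ⟨Sum.inr v0, by
      simp only [hS, Finset.mem_union, Finset.mem_image]
      exact Or.inr ⟨v0, hv0, rfl⟩⟩
  · rw [hScard, hTcard]
    have hn : ((G.edgeFinset.card + Fintype.card V : ℕ) : ℝ) ≠ 0 := by
      positivity
    have hq' : (q : ℝ) ≠ 0 := by
      exact_mod_cast Nat.one_le_iff_ne_zero.1 hq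
    have heq : ((4 * q : ℕ) : ℝ) *
        (((G.edgeFinset.card + Fintype.card V : ℕ) : ℝ) * (q + 1) / (q * (3 + 1))) /
        ((G.edgeFinset.card + Fintype.card V : ℕ) : ℝ) = ((q + 1 : ℕ) : ℝ) := by
      push_cast
      field_simp
      ring
    rw [heq]
  · intro i hi
    simp only [hS, Finset.mem_union, Finset.mem_image] at hi
    rcases hi with ⟨e, he, rfl⟩ | ⟨u, hu, rfl⟩
    · -- edge voter
      simp only [hS1, Finset.mem_filter] at he
      obtain ⟨-, u, hu, hue⟩ := he
      have h1 : redApprove G (Sum.inl e) ∩ ({none} : Finset (Option V)) = ∅ := by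
        rw [Finset.eq_empty_iff_forall_notMem]
        intro c hc
        simp only [redApprove, Finset.mem_inter, Finset.mem_filter, Finset.mem_singleton] at hc
        obtain ⟨⟨-, w, hw, -⟩, rfl⟩ := hc
        exact Option.some_ne_none w hw.symm
      rw [h1]
      rw [Finset.empty_ssubset]
      refine ⟨some u, Finset.mem_inter.2 ⟨?_, ?_⟩⟩
      · simp only [redApprove, Finset.mem_filter]
        exact ⟨Finset.mem_univ _, u, rfl, hue⟩
      · simp only [hT, Finset.mem_insert, Finset.mem_image]
        exact Or.inr ⟨u, hu, rfl⟩
    · -- apex voter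
      have h1 : redApprove G (Sum.inr u) ∩ ({none} : Finset (Option V)) = {none} := by
        simp [redApprove]
      have h2 : redApprove G (Sum.inr u) ∩ T = {none, some u} := by
        ext c
        simp only [redApprove, hT, Finset.mem_inter, Finset.mem_insert, Finset.mem_singleton,
          Finset.mem_image]
        constructor
        · rintro ⟨h, -⟩; exact h
        · rintro (rfl | rfl)
          · exact ⟨Or.inl rfl, Or.inl rfl⟩
          · exact ⟨Or.inr rfl, Or.inr ⟨u, hu, rfl⟩⟩
      rw [h1, h2]
      constructor
      · intro c hc
        simp only [Finset.mem_singleton] at hc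
        simp [hc]
      · intro h
        have := h (by simp : some u ∈ ({none, some u} : Finset (Option V)))
        simp at this
end

section
/- In the graph reduction from 3-regular subgraphs: given a Hamiltonian graph G = (V, E) with maximum degree 6 and n vertices, take voters = vertices (each approving her incident edges), candidates = edges, committee W = edges of a Hamiltonian cycle, and k = 3n/2 (so R = 2/3). Then W lies in the core if and only if G has no 3-regular subgraph. -/
open Finset

namespace ThreeReg

variable {V : Type} [DecidableEq V] {G : SimpleGraph V}

lemma countP_edges (u w : V) (p : G.Walk u w) (x : V) :
    p.edges.countP (fun e => decide (x ∈ e)) =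
      p.support.dropLast.count x + p.support.tail.count x := by
  induction p with
  | nil => simp
  | cons h q ih =>
      rename_i a b c
      have hsupp : q.support ≠ [] := q.support_ne_nil
      have hq : q.support.count x = q.support.tail.count x + (if x = b then 1 else 0) := by
        conv_lhs => rw [SimpleGraph.Walk.support_eq_cons q]
        rw [List.count_cons]
        simp [eq_comm (a := x)]
      have hab : a ≠ b := h.ne
      simp only [SimpleGraph.Walk.edges_cons, SimpleGraph.Walk.support_cons,
        List.countP_cons, List.tail_cons, ih, List.dropLast_cons_of_ne_nil hsupp,
        List.count_cons, Sym2.mem_iff, decide_eq_true_eq, beq_iff_eq, hq]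
      split_ifs <;> simp_all <;> omega

end ThreeReg

namespace ThreeReg
variable {V : Type} [DecidableEq V] {G : SimpleGraph V}

lemma ham_two {v₀ : V} {c : G.Walk v₀ v₀} (hc : c.IsHamiltonianCycle) (x : V) :
    c.edges.countP (fun e => decide (x ∈ e)) = 2 := by
  rw [countP_edges]
  have hnil : ¬ c.Nil := hc.isCycle.not_nil
  have htail : c.support.tail.count x = 1 := by
    rw [← SimpleGraph.Walk.support_tail_of_not_nil c hnil]
    exact hc.isHamiltonian_tail x
  have hcount : c.support.count x = c.support.dropLast.count x + [v₀].count x := by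
    conv_lhs => rw [show c.support = c.support.dropLast ++ [v₀] by
      conv_lhs => rw [← List.dropLast_append_getLast c.support_ne_nil]
      rw [c.getLast_support]]
    rw [List.count_append]
  by_cases hx : x = v₀
  · subst hx
    have h2 := hc.count_support_self
    simp only [List.count_singleton, beq_self_eq_true, if_true] at hcount
    omega
  · have h1 := hc.support_count_of_ne (fun h => hx h.symm)
    have : [v₀].count x = 0 := by
      simp [List.count_singleton, hx, Ne.symm hx]
    omega

/-- W ∩ incidence = 2 -/
lemma W_card [Fintype V] [DecidableRel G.Adj] {v₀ : V} {c : G.Walk v₀ v₀}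
    (hc : c.IsHamiltonianCycle) (x : V) :
    (c.edges.toFinset ∩ G.incidenceFinset x).card = 2 := by
  have hsub : c.edges.toFinset ∩ G.incidenceFinset x = (c.edges.filter (fun e => x ∈ e)).toFinset := by
    ext e
    simp only [Finset.mem_inter, List.mem_toFinset, List.mem_filter,
      SimpleGraph.mem_incidenceFinset, SimpleGraph.incidenceSet, Set.mem_setOf_eq]
    constructor
    · rintro ⟨he, hi⟩
      exact ⟨he, by simpa using hi.2⟩
    · rintro ⟨he, hi⟩
      exact ⟨he, ⟨c.edges_subset_edgeSet he, by simpa using hi⟩⟩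
  rw [hsub, List.toFinset_card_of_nodup ((hc.isCycle.isTrail.edges_nodup).filter _),
    ← List.countP_eq_length_filter, ham_two hc]

end ThreeReg

namespace ThreeReg
variable {V : Type} [DecidableEq V] {G : SimpleGraph V}

lemma E_inter [Fintype V] [DecidableRel G.Adj] {E' : Finset (Sym2 V)}
    (hE : E' ⊆ G.edgeFinset) (v : V) :
    E' ∩ G.incidenceFinset v = E'.filter (fun e => v ∈ e) := by
  ext e
  simp only [Finset.mem_inter, Finset.mem_filter, SimpleGraph.mem_incidenceFinset,
    SimpleGraph.incidenceSet, Set.mem_setOf_eq]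
  constructor
  · rintro ⟨he, hi⟩; exact ⟨he, hi.2⟩
  · rintro ⟨he, hi⟩
    exact ⟨he, SimpleGraph.mem_edgeFinset.mp (hE he), hi⟩

lemma double_count (V' : Finset V) (E' : Finset (Sym2 V)) :
    ∑ v ∈ V', (E'.filter (fun e => v ∈ e)).card
      = ∑ e ∈ E', (V'.filter (fun v => v ∈ e)).card := by
  simp_rw [Finset.card_filter]
  exact Finset.sum_comm

lemma filter_card {e : Sym2 V} (he : e ∈ G.edgeSet) (V' : Finset V) :
    (V'.filter (fun v => v ∈ e)).card ≤ 2 ∧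
    ((V'.filter (fun v => v ∈ e)).card = 2 ↔ ∀ v ∈ e, v ∈ V') := by
  induction e using Sym2.ind with
  | _ a b =>
    rw [SimpleGraph.mem_edgeSet] at he
    have hab : a ≠ b := he.ne
    have hsub : V'.filter (fun v => v ∈ (s(a, b) : Sym2 V)) ⊆ {a, b} := by
      intro v hv
      simp only [Finset.mem_filter, Sym2.mem_iff] at hv
      simp [hv.2]
    have hpair : ({a, b} : Finset V).card = 2 := Finset.card_pair hab
    refine ⟨(Finset.card_le_card hsub).trans hpair.le, ?_, ?_⟩
    · intro h2 v hv
      have heq : V'.filter (fun v => v ∈ (s(a, b) : Sym2 V)) = {a, b} :=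
        Finset.eq_of_subset_of_card_le hsub (by omega)
      have hv' : v ∈ ({a, b} : Finset V) := by
        rw [Sym2.mem_iff] at hv
        simp [hv]
      rw [← heq] at hv'
      exact (Finset.mem_filter.mp hv').1
    · intro hall
      have heq : V'.filter (fun v => v ∈ (s(a, b) : Sym2 V)) = {a, b} := by
        ext v
        simp only [Finset.mem_filter, Sym2.mem_iff, Finset.mem_insert, Finset.mem_singleton]
        constructor
        · exact fun h => h.2
        · rintro (rfl | rfl)
          · exact ⟨hall v (by simp), by simp⟩
          · exact ⟨hall v (by simp), by simp⟩
      rw [heq, hpair]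

end ThreeReg


/-- The 3-regular-subgraph reduction: in the approval election whose voters are the
vertices of a Hamiltonian graph `G` of maximum degree 6 (each approving her incident
edges), whose candidates are the edges of `G`, with committee `W` the edge set of a
Hamiltonian cycle and `k = 3n/2` (so `R = 2/3` and the deviation budget for a voter set
`V'` is `|V'|·k/n = (3/2)|V'|`), the committee `W` lies in the core if and only if
`G` has no 3-regular subgraph. -/
theorem hamiltonian_core_iff_no_three_regular_subgraph
    {V : Type} [Fintype V] [DecidableEq V]
    (G : SimpleGraph V) [DecidableRel G.Adj]
    (hdeg : ∀ v, G.degree v ≤ 6)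
    (v₀ : V) (c : G.Walk v₀ v₀) (hc : c.IsHamiltonianCycle)
    (W : Finset (Sym2 V)) (hW : W = c.edges.toFinset) :
    (¬ ∃ (V' : Finset V) (E' : Finset (Sym2 V)), V'.Nonempty ∧ E' ⊆ G.edgeFinset ∧
        (E'.card : ℝ) ≤ (V'.card : ℝ) *
          (3 * (Fintype.card V : ℝ) / 2) / (Fintype.card V : ℝ) ∧
        ∀ v ∈ V', (W ∩ G.incidenceFinset v).card < (E' ∩ G.incidenceFinset v).card)
    ↔
    (¬ ∃ (V' : Finset V) (E' : Finset (Sym2 V)), V'.Nonempty ∧ E' ⊆ G.edgeFinset ∧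
        (∀ e ∈ E', ∀ v, v ∈ e → v ∈ V') ∧
        ∀ v ∈ V', (E' ∩ G.incidenceFinset v).card = 3) := by
  have hn : (0 : ℝ) < (Fintype.card V : ℝ) := by
    have : 0 < Fintype.card V := Fintype.card_pos_iff.mpr ⟨v₀⟩
    exact_mod_cast this
  have hWc : ∀ x : V, (W ∩ G.incidenceFinset x).card = 2 := by
    intro x; rw [hW]; exact ThreeReg.W_card hc x
  have hreal : ∀ a b : ℕ, ((a : ℝ) ≤ (b : ℝ) *
      (3 * (Fintype.card V : ℝ) / 2) / (Fintype.card V : ℝ)) ↔ 2 * a ≤ 3 * b := by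
    intro a b
    rw [show (b : ℝ) * (3 * (Fintype.card V : ℝ) / 2) / (Fintype.card V : ℝ)
        = (3 * b) / 2 by field_simp]
    rw [le_div_iff₀ (by norm_num : (0:ℝ) < 2)]
    constructor
    · intro h; exact_mod_cast (by linarith : (2 * a : ℝ) ≤ 3 * b)
    · intro h; have : (2 * a : ℝ) ≤ 3 * b := by exact_mod_cast h
      linarith
  have hconst : ∀ (s : Finset V) (n : ℕ), (∑ _v ∈ s, n) = n * s.card := by
    intro s n; rw [Finset.sum_const, smul_eq_mul, mul_comm]
  have hconstE : ∀ (s : Finset (Sym2 V)) (n : ℕ), (∑ _e ∈ s, n) = n * s.card := by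
    intro s n; rw [Finset.sum_const, smul_eq_mul, mul_comm]
  apply not_congr
  constructor
  · rintro ⟨V', E', hne, hEsub, hcard, hdom⟩
    have hEset : ∀ e ∈ E', e ∈ G.edgeSet := fun e he =>
      SimpleGraph.mem_edgeFinset.mp (hEsub he)
    have hdeg3 : ∀ v ∈ V', 3 ≤ (E'.filter (fun e => v ∈ e)).card := by
      intro v hv
      have h := hdom v hv
      rw [hWc v, ThreeReg.E_inter hEsub v] at h
      omega
    have hcard' : 2 * E'.card ≤ 3 * V'.card := (hreal _ _).mp hcard
    have hsum1 : 3 * V'.card ≤ ∑ v ∈ V', (E'.filter (fun e => v ∈ e)).card := by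
      rw [← hconst V' 3]
      exact Finset.sum_le_sum hdeg3
    have hsum2 : ∑ e ∈ E', (V'.filter (fun v => v ∈ e)).card ≤ 2 * E'.card := by
      rw [← hconstE E' 2]
      exact Finset.sum_le_sum fun e he => (ThreeReg.filter_card (hEset e he) V').1
    have hdc := ThreeReg.double_count V' E'
    have heq1 : ∑ v ∈ V', (E'.filter (fun e => v ∈ e)).card = 3 * V'.card := by omega
    have heq2 : ∑ e ∈ E', (V'.filter (fun v => v ∈ e)).card = 2 * E'.card := by omega
    refine ⟨V', E', hne, hEsub, ?_, ?_⟩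
    · intro e he v hv
      have hcard2 : (V'.filter (fun v => v ∈ e)).card = 2 := by
        by_contra hne2
        have hlt : (V'.filter (fun v => v ∈ e)).card < 2 :=
          lt_of_le_of_ne (ThreeReg.filter_card (hEset e he) V').1 hne2
        have hstrict : ∑ e ∈ E', (V'.filter (fun v => v ∈ e)).card < ∑ _e ∈ E', 2 :=
          Finset.sum_lt_sum (fun i hi => (ThreeReg.filter_card (hEset i hi) V').1) ⟨e, he, hlt⟩
        rw [hconstE E' 2] at hstrict
        omega
      exact ((ThreeReg.filter_card (hEset e he) V').2.mp hcard2) v hv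
    · intro v hv
      rw [ThreeReg.E_inter hEsub v]
      by_contra hne3
      have hlt : 3 < (E'.filter (fun e => v ∈ e)).card :=
        lt_of_le_of_ne (hdeg3 v hv) (fun h => hne3 h.symm)
      have hstrict : ∑ _v ∈ V', 3 < ∑ v ∈ V', (E'.filter (fun e => v ∈ e)).card :=
        Finset.sum_lt_sum hdeg3 ⟨v, hv, hlt⟩
      rw [hconst V' 3] at hstrict
      omega
  · rintro ⟨V', E', hne, hEsub, hin, hdeg3⟩
    have hEset : ∀ e ∈ E', e ∈ G.edgeSet := fun e he =>
      SimpleGraph.mem_edgeFinset.mp (hEsub he)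
    refine ⟨V', E', hne, hEsub, ?_, ?_⟩
    · rw [hreal]
      have hsum1 : ∑ v ∈ V', (E'.filter (fun e => v ∈ e)).card = 3 * V'.card := by
        rw [← hconst V' 3]
        refine Finset.sum_congr rfl fun v hv => ?_
        rw [← ThreeReg.E_inter hEsub v]
        exact hdeg3 v hv
      have hsum2 : ∑ e ∈ E', (V'.filter (fun v => v ∈ e)).card = 2 * E'.card := by
        rw [← hconstE E' 2]
        exact Finset.sum_congr rfl fun e he =>
          (ThreeReg.filter_card (hEset e he) V').2.mpr (fun v hv => hin e he v hv)
      have hdc := ThreeReg.double_count V' E'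
      omega
    · intro v hv
      rw [hWc v, hdeg3 v hv]
      omega
end
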